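/- For θ ∈ (0,1), θ^(θ/(1-θ)) < 1 - θ^(1/(1-θ)). -/

import Mathlib

theorem rpow_ineq (θ : ℝ) (hθ : θ ∈ Set.Ioo (0:ℝ) 1) :
    θ ^ (θ / (1 - θ)) < 1 - θ ^ (1 / (1 - θ)) := by
  obtain ⟨h0, h1⟩ := hθ
  have hs : (0:ℝ) < 1 - θ := by linarith
  -- key log inequality
  have hlog1 : Real.log (1 + θ) < θ := by
    have := Real.log_lt_sub_one_of_pos (x := 1 + θ) (by linarith) (by intro h; linarith)
    linarith
  have hlog2 : Real.log θ < θ - 1 :=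
    Real.log_lt_sub_one_of_pos h0 (by intro h; linarith [h])
  have key : θ / (1 - θ) * Real.log θ < - Real.log (1 + θ) := by
    rw [div_mul_eq_mul_div, div_lt_iff₀ hs]
    nlinarith [Real.log_neg h0 h1]
  have hx : θ ^ (θ / (1 - θ)) < 1 / (1 + θ) := by
    rw [Real.rpow_def_of_pos h0]
    have : (1:ℝ) / (1 + θ) = Real.exp (-Real.log (1 + θ)) := by
      rw [Real.exp_neg, Real.exp_log (by linarith)]
      ring
    rw [this]
    exact Real.exp_lt_exp.mpr (by linarith [mul_comm (Real.log θ) (θ / (1 - θ))])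
  have hsplit : θ ^ (1 / (1 - θ)) = θ ^ (θ / (1 - θ)) * θ := by
    have he : 1 / (1 - θ) = θ / (1 - θ) + 1 := by field_simp; ring
    rw [he, Real.rpow_add h0, Real.rpow_one]
  rw [hsplit]
  have hxpos : 0 < θ ^ (θ / (1 - θ)) := Real.rpow_pos_of_pos h0 _
  have hx2 : θ ^ (θ / (1 - θ)) * (1 + θ) < 1 := (lt_div_iff₀ (by linarith)).mp hx
  nlinarith
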